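/- Let K be a Galois number field of degree n, γ_K its Hermite–Humbert constant, and η_K = min{|Nm_{K/ℚ}(x)| : x ∈ O_K, |Nm_{K/ℚ}(x)| ≥ 2}. If γ_K < n·η_K^{2/n}, then for every totally positive a ∈ K, every nonzero x ∈ O_K minimizing Tr_{K/ℚ}(a·x·x̄) is a unit. -/

import Mathlib

noncomputable section

/-- Total positivity: all complex embeddings take positive real values. -/
def totPos (K : Type*) [Field K] [NumberField K] (a : K) : Prop :=
  ∀ φ : K →+* ℂ, 0 < (φ a).re ∧ (φ a).im = 0

/-- The real value `Tr_{K/ℚ}(a·x·x̄) = ∑_φ φ(a)·|φ(x)|²` of the unary trace form at `x`. -/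
def qform (K : Type*) [Field K] [NumberField K] (a x : K) : ℝ :=
  ∑ φ : K →+* ℂ, (φ a).re * Complex.normSq (φ x)

/-- `μ(a)`: the infimum of the trace form over nonzero algebraic integers. -/
def muK (K : Type*) [Field K] [NumberField K] (a : K) : ℝ :=
  sInf { t | ∃ x : NumberField.RingOfIntegers K, x ≠ 0 ∧ t = qform K a (x : K) }

/-- `μ*(a)`: the infimum of the trace form over units. -/
def muStarK (K : Type*) [Field K] [NumberField K] (a : K) : ℝ :=
  sInf { t | ∃ u : (NumberField.RingOfIntegers K)ˣ,
    t = qform K a ((u : NumberField.RingOfIntegers K) : K) }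

/-- A number field is unit reducible if `μ(a) = μ*(a)` for all totally positive `a`. -/
def UnitReducible (K : Type*) [Field K] [NumberField K] : Prop :=
  ∀ a : K, totPos K a → muK K a = muStarK K a

/-- The reduction discrepancy `δ_K = sup_a μ*(a)/μ(a)`. -/
def deltaK (K : Type*) [Field K] [NumberField K] : ℝ :=
  sSup { t | ∃ a : K, totPos K a ∧ t = muStarK K a / muK K a }

/-- The Hermite–Humbert constant `γ_K = sup_a μ(a)/Nm(a)^{1/n}`. -/
def gammaK (K : Type*) [Field K] [NumberField K] : ℝ :=
  sSup { t | ∃ a : K, totPos K a ∧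
    t = muK K a / ((Algebra.norm ℚ a : ℝ) ^ ((1 : ℝ) / (Module.finrank ℚ K))) }

/-- `η_K`: the smallest absolute norm `≥ 2` of an algebraic integer of `K`. -/
def etaK (K : Type*) [Field K] [NumberField K] : ℝ :=
  sInf { t | ∃ x : NumberField.RingOfIntegers K,
    2 ≤ |(Algebra.norm ℚ (x : K))| ∧ t = |(Algebra.norm ℚ (x : K) : ℝ)| }


open NumberField in
lemma norm_eq_prod_ringhoms (K : Type) [Field K] [NumberField K] (x : K) :
    ((Algebra.norm ℚ x : ℚ) : ℂ) = ∏ φ : K →+* ℂ, φ x := by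
  have h := Algebra.norm_eq_prod_embeddings ℚ ℂ (x := x)
  rw [eq_ratCast] at h
  rw [h]
  exact (Fintype.prod_equiv (RingHom.equivRatAlgHom K ℂ) (fun φ => φ x) (fun σ => σ x)
    (fun φ => rfl)).symm

open NumberField in
lemma prod_normSq_eq (K : Type) [Field K] [NumberField K] (x : K) :
    ∏ φ : K →+* ℂ, Complex.normSq (φ x) = ((Algebra.norm ℚ x : ℚ) : ℝ) ^ 2 := by
  have : ∏ φ : K →+* ℂ, Complex.normSq (φ x) = Complex.normSq (∏ φ : K →+* ℂ, φ x) :=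
    (map_prod Complex.normSq _ _).symm
  rw [this, ← norm_eq_prod_ringhoms, ← Complex.ofReal_ratCast, Complex.normSq_ofReal, sq]

open NumberField in
lemma norm_eq_prod_re (K : Type) [Field K] [NumberField K] {a : K} (ha : totPos K a) :
    ((Algebra.norm ℚ a : ℚ) : ℝ) = ∏ φ : K →+* ℂ, (φ a).re := by
  have h := norm_eq_prod_ringhoms K a
  have h2 : ∏ φ : K →+* ℂ, φ a = ((∏ φ : K →+* ℂ, (φ a).re : ℝ) : ℂ) := by
    rw [Complex.ofReal_prod]
    exact Finset.prod_congr rfl fun φ _ => by rw [Complex.ext_iff]; simp [(ha φ).2]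
  rw [h2, ← Complex.ofReal_ratCast] at h
  exact_mod_cast h

open NumberField in
lemma muK_le (K : Type) [Field K] [NumberField K] {a : K} (ha : totPos K a)
    {x : RingOfIntegers K} (hx : x ≠ 0) :
    muK K a ≤ qform K a (x : K) := by
  refine csInf_le ⟨0, ?_⟩ ⟨x, hx, rfl⟩
  rintro t ⟨y, -, rfl⟩
  exact Finset.sum_nonneg fun φ _ => mul_nonneg (ha φ).1.le (Complex.normSq_nonneg _)

open NumberField in
lemma hermite (K : Type) [Field K] [NumberField K] : ∃ C : ℝ, ∀ a : K, totPos K a →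
    muK K a ≤ C * ((Algebra.norm ℚ a : ℚ) : ℝ) ^ ((1 : ℝ) / (Module.finrank ℚ K)) := by
  classical
  set n := Module.finrank ℚ K with hn_def
  have hn : 0 < n := Module.finrank_pos
  set B : NNReal := (mixedEmbedding.minkowskiBound K ↑1).toNNReal + 1 with hB_def
  have hB1 : (1 : NNReal) ≤ B := le_add_self
  have hBpos : (0:ℝ) < (B:ℝ) := by exact_mod_cast lt_of_lt_of_le one_pos hB1
  refine ⟨(n : ℝ) * ((B:ℝ)^2) ^ ((1:ℝ)/n), fun a ha => ?_⟩
  set N : ℝ := ((Algebra.norm ℚ a : ℚ) : ℝ) with hN_def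
  have hN : 0 < N := by
    rw [hN_def, norm_eq_prod_re K ha]; exact Finset.prod_pos fun φ _ => (ha φ).1
  set t : ℝ := ((B:ℝ)^2 * N) ^ ((1:ℝ)/n) with ht_def
  have ht : 0 < t := Real.rpow_pos_of_pos (mul_pos (by positivity) hN) _
  have hne : Nonempty (K →+* ℂ) := Fintype.card_pos_iff.mp
    (by rw [Embeddings.card K ℂ]; exact hn)
  have ha0 : a ≠ 0 := by
    rintro rfl
    simpa using (ha (Classical.arbitrary (K →+* ℂ))).1
  have hwa : ∀ w : InfinitePlace K, 0 < w a := fun w => InfinitePlace.pos_iff.mpr ha0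
  set f : InfinitePlace K → NNReal := fun w => Real.toNNReal (Real.sqrt (t / w a)) with hf_def
  have hfw : ∀ w : InfinitePlace K, (f w : ℝ) = Real.sqrt (t / w a) := fun w =>
    Real.coe_toNNReal _ (Real.sqrt_nonneg _)
  have htn : t ^ n = (B:ℝ)^2 * N := by
    rw [ht_def, one_div, Real.rpow_inv_natCast_pow (mul_pos (by positivity) hN).le hn.ne']
  have hprod : ∏ w : InfinitePlace K, (f w : ℝ) ^ w.mult = (B:ℝ) := by
    have hsq : (∏ w : InfinitePlace K, (f w : ℝ) ^ w.mult) ^ 2 = (B:ℝ)^2 := by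
      rw [← Finset.prod_pow]
      have heach : ∀ w : InfinitePlace K, ((f w : ℝ) ^ w.mult) ^ 2 = (t / w a) ^ w.mult := by
        intro w
        rw [hfw, ← pow_right_comm, Real.sq_sqrt (div_nonneg ht.le (hwa w).le)]
      rw [Finset.prod_congr rfl fun w _ => heach w]
      simp_rw [div_pow]
      rw [Finset.prod_div_distrib, Finset.prod_pow_eq_pow_sum, InfinitePlace.sum_mult_eq,
        ← hn_def, htn, InfinitePlace.prod_eq_abs_norm, Rat.cast_abs, ← hN_def, abs_of_pos hN,
        mul_div_assoc, div_self hN.ne', mul_one]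
    have hP : 0 ≤ ∏ w : InfinitePlace K, (f w : ℝ) ^ w.mult :=
      Finset.prod_nonneg fun w _ => pow_nonneg (f w).2 _
    nlinarith [hP, hBpos]
  have hvol : mixedEmbedding.minkowskiBound K ↑1
      < MeasureTheory.volume (mixedEmbedding.convexBodyLT K f) := by
    have hprodN : ∏ w : InfinitePlace K, f w ^ w.mult = B :=
      NNReal.coe_injective (by push_cast; exact hprod)
    rw [mixedEmbedding.convexBodyLT_volume, hprodN]
    calc mixedEmbedding.minkowskiBound K ↑1
        < (B : ENNReal) := by
          rw [hB_def]
          push_cast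
          rw [ENNReal.coe_toNNReal (mixedEmbedding.minkowskiBound_lt_top K ↑1).ne]
          exact ENNReal.lt_add_right (mixedEmbedding.minkowskiBound_lt_top K ↑1).ne one_ne_zero
      _ ≤ _ := le_mul_of_one_le_left zero_le
          (by exact_mod_cast mixedEmbedding.one_le_convexBodyLTFactor K)
  obtain ⟨y, hy0, hy⟩ := mixedEmbedding.exists_ne_zero_mem_ringOfIntegers_lt K hvol
  have hq : qform K a (y : K) ≤ n * t := by
    rw [qform]
    calc ∑ φ : K →+* ℂ, (φ a).re * Complex.normSq (φ (y:K))
        ≤ ∑ _φ : K →+* ℂ, t := by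
          refine Finset.sum_le_sum fun φ _ => ?_
          set w := InfinitePlace.mk φ with hw_def
          have hre : (φ a).re = w a := by
            have hφa : φ a = (((φ a).re : ℝ) : ℂ) :=
              Complex.ext (by simp) (by simp [(ha φ).2])
            rw [hw_def, InfinitePlace.apply, hφa, Complex.norm_real, Real.norm_eq_abs, abs_of_pos (ha φ).1]
            simp
          have hns : Complex.normSq (φ (y:K)) = (w (y:K))^2 := by
            rw [hw_def, InfinitePlace.apply, Complex.sq_norm]
          rw [hre, hns]
          have h1 : (w (y:K))^2 ≤ (f w : ℝ)^2 :=
            pow_le_pow_left₀ (apply_nonneg w _) (hy w).le 2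
          have h2 : (f w : ℝ)^2 = t / w a := by
            rw [hfw, Real.sq_sqrt (div_nonneg ht.le (hwa w).le)]
          calc w a * (w (y:K))^2 ≤ w a * (t / w a) := by
                refine mul_le_mul_of_nonneg_left ?_ (hwa w).le
                rw [← h2]; exact h1
            _ = t := by rw [mul_comm, div_mul_cancel₀ _ (hwa w).ne']
      _ = n * t := by
          rw [Finset.sum_const, Finset.card_univ, Embeddings.card K ℂ, nsmul_eq_mul]
  have hfin := (muK_le K ha hy0).trans hq
  calc muK K a ≤ n * t := hfin
    _ = (n : ℝ) * ((B:ℝ)^2) ^ ((1:ℝ)/n) * N ^ ((1:ℝ)/n) := by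
        rw [ht_def, Real.mul_rpow (by positivity) hN.le, mul_assoc]
    _ = _ := by rw [hN_def]

open NumberField in
lemma etaK_two_le (K : Type) [Field K] [NumberField K] : (2:ℝ) ≤ etaK K := by
  refine le_csInf
    ⟨|((Algebra.norm ℚ (((2:RingOfIntegers K) : K)) : ℚ) : ℝ)|, (2:RingOfIntegers K), ?_, rfl⟩ ?_
  · have h2 : ((2:RingOfIntegers K) : K) = algebraMap ℚ K 2 := by
      rw [map_ofNat]
      exact map_ofNat (algebraMap (RingOfIntegers K) K) 2
    rw [h2, Algebra.norm_algebraMap]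
    rw [abs_pow, abs_two]
    calc (2:ℚ) = 2^1 := (pow_one 2).symm
      _ ≤ 2 ^ Module.finrank ℚ K := pow_le_pow_right₀ one_le_two Module.finrank_pos
  · rintro t ⟨y, hy2, rfl⟩
    rw [← Rat.cast_abs]
    exact_mod_cast hy2

open NumberField in
/-- If `γ_K < n·η_K^{2/n}` then every minimizer of the trace form of a totally positive
element is a unit (so `K` is strongly unit reducible). -/
theorem stmt16 (K : Type) [Field K] [NumberField K] [IsGalois ℚ K]
    (h : gammaK K <
      (Module.finrank ℚ K : ℝ) * etaK K ^ ((2 : ℝ) / (Module.finrank ℚ K))) :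
    ∀ a : K, totPos K a → ∀ x : NumberField.RingOfIntegers K, x ≠ 0 →
      qform K a (x : K) = muK K a → IsUnit x := by
  intro a ha x hx hmin
  have hn : 0 < Module.finrank ℚ K := Module.finrank_pos
  set n : ℕ := Module.finrank ℚ K with hn_def
  set N : ℝ := ((Algebra.norm ℚ a : ℚ) : ℝ) with hN_def
  have hN : 0 < N := by
    rw [hN_def, norm_eq_prod_re K ha]; exact Finset.prod_pos fun φ _ => (ha φ).1
  set N1 : ℝ := N ^ ((1:ℝ)/n) with hN1_def
  have hN1 : 0 < N1 := Real.rpow_pos_of_pos hN _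
  -- gamma bound
  obtain ⟨C, hC⟩ := hermite K
  have hγ : muK K a / N1 ≤ gammaK K := by
    refine le_csSup ⟨C, ?_⟩ ⟨a, ha, rfl⟩
    rintro t ⟨b, hb, rfl⟩
    have hNb : (0:ℝ) < ((Algebra.norm ℚ b : ℚ) : ℝ) := by
      rw [norm_eq_prod_re K hb]; exact Finset.prod_pos fun φ _ => (hb φ).1
    rw [div_le_iff₀ (Real.rpow_pos_of_pos hNb _)]
    exact hC b hb
  -- AM-GM
  set z : (K →+* ℂ) → ℝ := fun φ => (φ a).re * Complex.normSq (φ (x:K)) with hz_def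
  have hz : ∀ φ, 0 ≤ z φ := fun φ => mul_nonneg (ha φ).1.le (Complex.normSq_nonneg _)
  have hcard : Fintype.card (K →+* ℂ) = n := Embeddings.card K ℂ
  have hwsum : ∑ _φ : K →+* ℂ, (1:ℝ)/n = 1 := by
    rw [Finset.sum_const, Finset.card_univ, hcard, nsmul_eq_mul]
    field_simp
  have hAM := Real.geom_mean_le_arith_mean_weighted Finset.univ (fun _ => (1:ℝ)/n) z
    (fun _ _ => by positivity) hwsum (fun φ _ => hz φ)
  rw [Real.finset_prod_rpow Finset.univ z (fun φ _ => hz φ) ((1:ℝ)/n)] at hAM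
  set M : ℝ := ((Algebra.norm ℚ (x:K) : ℚ) : ℝ) with hM_def
  have hxK : (x:K) ≠ 0 := RingOfIntegers.coe_ne_zero_iff.mpr hx
  have hM0 : M ≠ 0 := by
    rw [hM_def]
    exact_mod_cast Algebra.norm_ne_zero_iff.mpr hxK
  have hprodz : ∏ φ : K →+* ℂ, z φ = N * M^2 := by
    rw [hz_def]
    rw [Finset.prod_mul_distrib, ← norm_eq_prod_re K ha, prod_normSq_eq K]
  have hR : ∑ φ : K →+* ℂ, (1:ℝ)/n * z φ = muK K a / n := by
    rw [← Finset.mul_sum]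
    have : ∑ φ : K →+* ℂ, z φ = qform K a (x:K) := rfl
    rw [this, hmin, one_div_mul_eq_div]
  rw [hprodz, hR] at hAM
  -- chain
  have hmu : muK K a ≤ gammaK K * N1 := (div_le_iff₀ hN1).mp hγ
  have hkey : (M^2) ^ ((1:ℝ)/n) < etaK K ^ ((2:ℝ)/n) := by
    have h1 : N1 * (M^2) ^ ((1:ℝ)/n) < etaK K ^ ((2:ℝ)/n) * N1 := by
      calc N1 * (M^2) ^ ((1:ℝ)/n) = (N * M^2) ^ ((1:ℝ)/n) := by
            rw [Real.mul_rpow hN.le (sq_nonneg M)]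
        _ ≤ muK K a / n := hAM
        _ ≤ (gammaK K * N1) / n := by
            have hc : (0:ℝ) < (n:ℝ) := by exact_mod_cast hn
            exact (div_le_div_iff_of_pos_right hc).mpr hmu
        _ < (((n:ℝ) * etaK K ^ ((2:ℝ)/n)) * N1) / n := by
            have hc : (0:ℝ) < (n:ℝ) := by exact_mod_cast hn
            exact (div_lt_div_iff_of_pos_right hc).mpr (mul_lt_mul_of_pos_right h hN1)
        _ = etaK K ^ ((2:ℝ)/n) * N1 := by
            have hc : (n:ℝ) ≠ 0 := by exact_mod_cast hn.ne'
            field_simp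
    rw [mul_comm] at h1
    exact lt_of_mul_lt_mul_right h1 hN1.le
  -- rewrite as |M| ^ (2/n)
  have habs : (M^2) ^ ((1:ℝ)/n) = |M| ^ ((2:ℝ)/n) := by
    rw [← sq_abs, ← Real.rpow_natCast |M| 2, ← Real.rpow_mul (abs_nonneg M)]
    norm_num
    rw [div_eq_mul_inv]
  rw [habs] at hkey
  have hη2 : (2:ℝ) ≤ etaK K := etaK_two_le K
  -- |M| < etaK K
  have hMη : |M| < etaK K := by
    by_contra hcon
    push_neg at hcon
    have h2n : (0:ℝ) ≤ (2:ℝ)/n := by positivity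
    have := Real.rpow_le_rpow (by linarith) hcon h2n
    linarith
  -- not 2 ≤ |Nm x|
  have hlt2 : |(Algebra.norm ℚ (x:K))| < 2 := by
    by_contra hcon
    push_neg at hcon
    have hmem : |M| ∈ { t | ∃ y : RingOfIntegers K,
        2 ≤ |(Algebra.norm ℚ (y : K))| ∧ t = |(Algebra.norm ℚ (y : K) : ℝ)| } :=
      ⟨x, hcon, rfl⟩
    have hbdd : BddBelow { t | ∃ y : RingOfIntegers K,
        2 ≤ |(Algebra.norm ℚ (y : K))| ∧ t = |(Algebra.norm ℚ (y : K) : ℝ)| } := by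
      refine ⟨0, ?_⟩
      rintro t ⟨y, -, rfl⟩
      positivity
    have := csInf_le hbdd hmem
    rw [etaK] at hMη
    linarith
  -- integrality
  have hint : IsIntegral ℤ (Algebra.norm ℚ (x:K)) :=
    Algebra.isIntegral_norm ℚ (RingOfIntegers.isIntegral_coe x)
  obtain ⟨w, hw⟩ := IsIntegrallyClosed.isIntegral_iff.mp hint
  rw [NumberField.isUnit_iff_norm, RingOfIntegers.coe_norm]
  have hw0 : w ≠ 0 := by
    rintro rfl
    rw [map_zero] at hw
    exact Algebra.norm_ne_zero_iff.mpr hxK hw.symm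
  have hwlt : |w| < 2 := by
    have : |(algebraMap ℤ ℚ w)| < 2 := by rw [hw]; exact hlt2
    rw [eq_intCast] at this
    exact_mod_cast this
  have hrange := abs_lt.mp hwlt
  have h1 : w = 1 ∨ w = -1 := by omega
  have habs1 : |w| = 1 := by rcases h1 with rfl | rfl <;> simp
  rw [← hw, eq_intCast, ← Int.cast_abs, habs1, Int.cast_one]
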